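/- arXiv:2401.00666 — 7 statements merged into one kernel-verified Lean document; each statement's English description precedes it below -/
import Mathlib

section
/- For a path P_n with n ≥ 5 vertices, the chromatic number of its δ-complement equals ⌈(n-2)/2⌉. -/
open scoped Classical
open SimpleGraph

/-- The δ-complement of a graph: `u v` are adjacent iff they are distinct and
either they have equal degrees and are non-adjacent in `G`, or they have
different degrees and are adjacent in `G`. -/
def deltaComp {V : Type*} [Fintype V] (G : SimpleGraph V) : SimpleGraph V where
  Adj u v := u ≠ v ∧ ((G.degree u = G.degree v ∧ ¬ G.Adj u v) ∨
    (G.degree u ≠ G.degree v ∧ G.Adj u v))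
  symm := by
    constructor
    intro u v h
    refine ⟨h.1.symm, ?_⟩
    rcases h.2 with ⟨hd, ha⟩ | ⟨hd, ha⟩
    · exact Or.inl ⟨hd.symm, fun hh => ha hh.symm⟩
    · exact Or.inr ⟨fun hh => hd hh.symm, ha.symm⟩
  loopless := ⟨fun v h => h.1 rfl⟩

/-- The δ-chromatic number: chromatic number of the δ-complement. -/
noncomputable def deltaChrom {V : Type*} [Fintype V] (G : SimpleGraph V) : ℕ∞ :=
  (deltaComp G).chromaticNumber

lemma pathGraph_degree {n : ℕ} (hn : 2 ≤ n) (v : Fin n) :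
    (pathGraph n).degree v = if v.val = 0 ∨ v.val = n - 1 then 1 else 2 := by
  classical
  rw [SimpleGraph.degree]
  split_ifs with h
  · rcases h with h | h
    · have : (pathGraph n).neighborFinset v = {⟨1, by omega⟩} := by
        ext w
        simp only [SimpleGraph.mem_neighborFinset, pathGraph_adj, Finset.mem_singleton,
          Fin.ext_iff]
        omega
      rw [this]; simp
    · have : (pathGraph n).neighborFinset v = {⟨n - 2, by omega⟩} := by
        ext w
        simp only [SimpleGraph.mem_neighborFinset, pathGraph_adj, Finset.mem_singleton,
          Fin.ext_iff]
        omega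
      rw [this]; simp
  · push_neg at h
    have hv1 : v.val - 1 < n := by omega
    have hv2 : v.val + 1 < n := by omega
    have : (pathGraph n).neighborFinset v = {⟨v.val - 1, hv1⟩, ⟨v.val + 1, hv2⟩} := by
      ext w
      simp only [SimpleGraph.mem_neighborFinset, pathGraph_adj, Finset.mem_insert,
        Finset.mem_singleton, Fin.ext_iff]
      omega
    rw [this, Finset.card_insert_of_notMem, Finset.card_singleton]
    simp only [Finset.mem_singleton, Fin.ext_iff]
    omega

lemma deltaComp_adj {V : Type*} [Fintype V] (G : SimpleGraph V) (u v : V) :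
    (deltaComp G).Adj u v ↔ u ≠ v ∧ ((G.degree u = G.degree v ∧ ¬ G.Adj u v) ∨
    (G.degree u ≠ G.degree v ∧ G.Adj u v)) := Iff.rfl

lemma deltaComp_path_adj {n : ℕ} (hn : 5 ≤ n) (u v : Fin n) :
    (deltaComp (pathGraph n)).Adj u v ↔ u.val ≠ v.val ∧
      ((((u.val = 0 ∨ u.val = n - 1) ↔ (v.val = 0 ∨ v.val = n - 1)) ∧
          ¬(u.val + 1 = v.val ∨ v.val + 1 = u.val)) ∨
       (¬((u.val = 0 ∨ u.val = n - 1) ↔ (v.val = 0 ∨ v.val = n - 1)) ∧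
          (u.val + 1 = v.val ∨ v.val + 1 = u.val))) := by
  have hdeg : ((pathGraph n).degree u = (pathGraph n).degree v) ↔
      ((u.val = 0 ∨ u.val = n - 1) ↔ (v.val = 0 ∨ v.val = n - 1)) := by
    rw [pathGraph_degree (by omega) u, pathGraph_degree (by omega) v]
    split_ifs with h1 h2 h2 <;> simp [h1, h2]
  rw [deltaComp_adj, hdeg, pathGraph_adj, ne_eq, Fin.ext_iff]
  omega


/-- For `n ≥ 5`, `χ_δ(P_n) = ⌈(n-2)/2⌉`. -/
theorem deltaChrom_pathGraph (n : ℕ) (hn : 5 ≤ n) :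
    deltaChrom (pathGraph n) = (((n - 2 + 1) / 2 : ℕ) : ℕ∞) := by
  set k : ℕ := (n - 2 + 1) / 2 with hk
  have hk2 : 2 ≤ k := by omega
  -- the explicit coloring
  have hval : ∀ j : ℕ, j < n →
      (if j = 0 then k - 1 else if j = n - 1 then 0 else (j - 1) / 2) < k := by
    intro j hj; split_ifs <;> omega
  let c : (deltaComp (pathGraph n)).Coloring (Fin k) :=
    SimpleGraph.Coloring.mk
      (fun v => ⟨if v.val = 0 then k - 1 else if v.val = n - 1 then 0 else (v.val - 1) / 2,
        hval v.val v.isLt⟩)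
      (by
        intro u v hadj
        rw [deltaComp_path_adj hn] at hadj
        simp only [ne_eq, Fin.mk.injEq]
        have hu := u.isLt
        have hv := v.isLt
        split_ifs <;> omega)
  have hcol : (deltaComp (pathGraph n)).Colorable k := ⟨c⟩
  -- lower bound
  have hlow : ∀ C : ℕ, (deltaComp (pathGraph n)).Colorable C → k ≤ C := by
    rintro C ⟨f⟩
    set I : Finset (Fin n) := Finset.univ.filter (fun v => v.val ≠ 0 ∧ v.val ≠ n - 1) with hI
    have hIcard : n - 2 ≤ I.card := by
      have := Finset.card_le_card_of_injOn (f := fun i : Fin (n - 2) => (⟨i.val + 1, by omega⟩ : Fin n))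
        (s := Finset.univ) (t := I)
        (by intro a _; simp only [hI, Finset.mem_coe, Finset.mem_filter, Finset.mem_univ, true_and]
            have := a.isLt; omega)
        (by intro a _ b _ hab
            simpa [Fin.ext_iff] using hab)
      simpa using this
    have hsum : I.card = ∑ b : Fin C, (I.filter (fun v => f v = b)).card :=
      Finset.card_eq_sum_card_fiberwise (fun v _ => Finset.mem_univ _)
    have hfib : ∀ b : Fin C, (I.filter (fun v => f v = b)).card ≤ 2 := by
      intro b
      by_contra hcon
      push_neg at hcon
      rw [Finset.two_lt_card_iff] at hcon
      obtain ⟨x, y, z, hx, hy, hz, hxy, hxz, hyz⟩ := hcon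
      have mem : ∀ w : Fin n, w ∈ I.filter (fun v => f v = b) →
          (w.val ≠ 0 ∧ w.val ≠ n - 1) ∧ f w = b := by
        intro w hw
        simp only [hI, Finset.mem_filter, Finset.mem_univ, true_and] at hw
        tauto
      have key : ∀ p q : Fin n, p ∈ I.filter (fun v => f v = b) →
          q ∈ I.filter (fun v => f v = b) → p ≠ q →
          (p.val + 1 = q.val ∨ q.val + 1 = p.val) := by
        intro p q hp hq hpq
        have hfp := (mem p hp).2
        have hfq := (mem q hq).2
        have hnadj : ¬ (deltaComp (pathGraph n)).Adj p q := by
          intro hadj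
          exact (f.valid hadj) (hfp.trans hfq.symm)
        rw [deltaComp_path_adj hn] at hnadj
        have hip := (mem p hp).1
        have hiq := (mem q hq).1
        have : p.val ≠ q.val := fun h => hpq (Fin.ext h)
        omega
      have h1 := key x y hx hy hxy
      have h2 := key x z hx hz hxz
      have h3 := key y z hy hz hyz
      have e1 : x.val ≠ y.val := fun h => hxy (Fin.ext h)
      have e2 : x.val ≠ z.val := fun h => hxz (Fin.ext h)
      have e3 : y.val ≠ z.val := fun h => hyz (Fin.ext h)
      omega
    have : I.card ≤ C * 2 := by
      rw [hsum]
      calc ∑ b : Fin C, (I.filter (fun v => f v = b)).card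
          ≤ ∑ _b : Fin C, 2 := Finset.sum_le_sum (fun b _ => hfib b)
        _ = C * 2 := by simp [Finset.sum_const, mul_comm]
    omega
  -- combine
  rw [deltaChrom]
  refine le_antisymm (hcol.chromaticNumber_le) ?_
  rw [SimpleGraph.chromaticNumber]
  exact le_iInf₂ fun m hm => by exact_mod_cast hlow m hm
end

section
/- For finite graphs G and H, every edge of the Cartesian product of δ-complements G_δ □ H_δ is also an edge of the δ-complement of the Cartesian product (G □ H)_δ. -/
open scoped Classical
open SimpleGraph

private lemma boxProd_degree' {V W : Type*} [Fintype V] [Fintype W]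
    (G : SimpleGraph V) (H : SimpleGraph W) (x : V × W)
    {i : Fintype ((G □ H).neighborSet x)}
    [Fintype (G.neighborSet x.1)] [Fintype (H.neighborSet x.2)] :
    @SimpleGraph.degree _ (G □ H) x i = G.degree x.1 + H.degree x.2 := by
  have := SimpleGraph.degree_boxProd (G := G) (H := H) x
  convert this using 2

/-- Every edge of `G_δ □ H_δ` is an edge of `(G □ H)_δ`. -/
theorem boxProd_deltaComp_le {V W : Type*} [Fintype V] [Fintype W]
    (G : SimpleGraph V) (H : SimpleGraph W) (u v : V × W)
    (h : (deltaComp G □ deltaComp H).Adj u v) :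
    (deltaComp (G □ H)).Adj u v := by
  rcases h with ⟨⟨hne, hcases⟩, h2⟩ | ⟨⟨hne, hcases⟩, h2⟩
  · -- first coordinates adjacent in deltaComp G, second equal
    refine ⟨fun hq => hne (congrArg Prod.fst hq), ?_⟩
    rcases hcases with ⟨hd, ha⟩ | ⟨hd, ha⟩
    · refine Or.inl ⟨?_, ?_⟩
      · rw [boxProd_degree', boxProd_degree', hd, h2]
      · rw [SimpleGraph.boxProd_adj]
        push_neg
        exact ⟨fun hA _ => ha hA, fun hA => absurd h2 hA.ne⟩
    · refine Or.inr ⟨?_, ?_⟩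
      · rw [boxProd_degree', boxProd_degree', h2]
        simpa using hd
      · exact Or.inl ⟨ha, h2⟩
  · refine ⟨fun hq => hne (congrArg Prod.snd hq), ?_⟩
    rcases hcases with ⟨hd, ha⟩ | ⟨hd, ha⟩
    · refine Or.inl ⟨?_, ?_⟩
      · rw [boxProd_degree', boxProd_degree', hd, h2]
      · rw [SimpleGraph.boxProd_adj]
        push_neg
        exact ⟨fun hA => absurd h2 hA.ne, fun hA _ => ha hA⟩
    · refine Or.inr ⟨?_, ?_⟩
      · rw [boxProd_degree', boxProd_degree', h2]
        simpa using hd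
      · exact Or.inr ⟨ha, h2⟩
end

section
/- Let G and H be finite graphs such that no positive difference of two vertex degrees in G equals a positive difference of two vertex degrees in H. Then χ_δ(G □ H) ≤ n_max(H) · max{χ_δ(G), m(H)}, where n_max(H) is the maximum number of vertices of H sharing the same degree and m(H) is the number of distinct degrees occurring in H. -/
open scoped Classical
open SimpleGraph

/-- The maximum number of vertices of `H` sharing the same degree. -/
noncomputable def nMaxDeg {W : Type*} [Fintype W] (H : SimpleGraph W) : ℕ :=
  Finset.univ.sup fun x : W =>
    (Finset.univ.filter fun y : W => H.degree y = H.degree x).card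

/-- The number of distinct degrees occurring in `H`. -/
noncomputable def numDeg {W : Type*} [Fintype W] (H : SimpleGraph W) : ℕ :=
  (Finset.univ.image fun y : W => H.degree y).card

/-- If no positive degree difference in `G` equals a positive degree difference
in `H`, then `χ_δ(G □ H) ≤ n_max(H) · max {χ_δ(G), m(H)}`. -/
theorem deltaChrom_boxProd_le {V W : Type*} [Fintype V] [Fintype W]
    (G : SimpleGraph V) (H : SimpleGraph W)
    (hdeg : ∀ (u v : V) (x y : W),
      (G.degree u : ℤ) - G.degree v = (H.degree x : ℤ) - H.degree y →
        G.degree u = G.degree v) :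
    deltaChrom (G □ H) ≤
      (nMaxDeg H : ℕ∞) * max (deltaChrom G) ((numDeg H : ℕ) : ℕ∞) := by
  classical
  set k : ℕ := ENat.toNat (deltaComp G).chromaticNumber with hk
  have hkcol : (deltaComp G).Colorable k := (deltaComp G).colorable_chromaticNumber_of_fintype
  have hkeq : deltaChrom G = (k : ℕ∞) := by
    have hne : (deltaComp G).chromaticNumber ≠ ⊤ :=
      (SimpleGraph.chromaticNumber_ne_top_iff_exists).2 ⟨_, (deltaComp G).colorable_of_fintype⟩
    simp [deltaChrom, hk, ENat.coe_toNat hne]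
  obtain ⟨c⟩ := hkcol
  set m : ℕ := numDeg H with hm
  set nm : ℕ := nMaxDeg H with hnm
  set M : ℕ := max k m with hM
  -- degree-index function
  set T : Finset ℕ := Finset.univ.image fun y : W => H.degree y with hT
  set d : W → ℕ := fun x => (T.filter fun t => t < H.degree x).card with hd
  have hdlt : ∀ x : W, d x < m := by
    intro x
    have hmem : H.degree x ∈ T := by simp [hT]
    have : (T.filter fun t => t < H.degree x).card < T.card := by
      apply Finset.card_lt_card
      refine ⟨Finset.filter_subset _ _, fun hsub => ?_⟩
      have := hsub hmem
      simp at this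
    simpa [hm, numDeg, hT] using this
  have hdinj : ∀ x y : W, H.degree x ≠ H.degree y → d x ≠ d y := by
    have key : ∀ x y : W, H.degree x < H.degree y → d x < d y := by
      intro x y hxy
      apply Finset.card_lt_card
      refine ⟨?_, fun hsub => ?_⟩
      · intro t ht
        simp only [Finset.mem_filter] at ht ⊢
        exact ⟨ht.1, lt_trans ht.2 hxy⟩
      have hmem : H.degree x ∈ T.filter fun t => t < H.degree y := by
        simp [hT, hxy]
      have := hsub hmem
      simp at this
    intro x y hne
    rcases lt_or_gt_of_ne hne with h | h
    · exact ne_of_lt (key x y h)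
    · exact (ne_of_lt (key y x h)).symm
  -- within-class index function
  set e : W ≃ Fin (Fintype.card W) := Fintype.equivFin W with he
  set idx : W → ℕ := fun x =>
    ((Finset.univ.filter fun y : W => H.degree y = H.degree x).filter
      fun y => e y < e x).card with hidx
  have hidxlt : ∀ x : W, idx x < nm := by
    intro x
    have h1 : idx x < (Finset.univ.filter fun y : W => H.degree y = H.degree x).card := by
      apply Finset.card_lt_card
      refine ⟨Finset.filter_subset _ _, fun hsub => ?_⟩
      have hmem : x ∈ Finset.univ.filter fun y : W => H.degree y = H.degree x := by simp
      have := hsub hmem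
      simp at this
    have h2 : (Finset.univ.filter fun y : W => H.degree y = H.degree x).card ≤ nm :=
      Finset.le_sup (f := fun x : W =>
        (Finset.univ.filter fun y : W => H.degree y = H.degree x).card) (Finset.mem_univ x)
    exact lt_of_lt_of_le h1 h2
  have hidxinj : ∀ x y : W, H.degree x = H.degree y → x ≠ y → idx x ≠ idx y := by
    have key : ∀ x y : W, H.degree x = H.degree y → e x < e y → idx x < idx y := by
      intro x y hdeq hlt
      apply Finset.card_lt_card
      constructor
      · intro z hz
        simp only [Finset.mem_filter, Finset.mem_univ, true_and] at hz ⊢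
        exact ⟨hz.1.trans hdeq, lt_trans hz.2 hlt⟩
      · intro hsub
        have hmem : x ∈ (Finset.univ.filter fun z : W => H.degree z = H.degree y).filter
            fun z => e z < e y := by
          simp [hdeq, hlt]
        have := hsub hmem
        simp at this
    intro x y hdeq hne
    have : e x ≠ e y := fun h => hne (e.injective h)
    rcases lt_or_gt_of_ne this with h | h
    · exact ne_of_lt (key x y hdeq h)
    · exact (ne_of_lt (key y x hdeq.symm h)).symm
  -- product degree formula (for any Fintype instance on the neighbor set)
  have hdegP : ∀ (p : V × W) (I : Fintype ((G □ H).neighborSet p)),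
      @SimpleGraph.degree _ (G □ H) p I = G.degree p.1 + H.degree p.2 := by
    intro p I
    have hI : I = SimpleGraph.boxProdFintypeNeighborSet p := Subsingleton.elim _ _
    subst hI
    exact SimpleGraph.degree_boxProd p
  -- equal product degrees split
  have hsplit : ∀ (u v : V) (x y : W),
      G.degree u + H.degree x = G.degree v + H.degree y →
        G.degree u = G.degree v ∧ H.degree x = H.degree y := by
    intro u v x y h
    have h' : (G.degree u : ℤ) - G.degree v = (H.degree y : ℤ) - H.degree x := by
      have := congrArg (fun n : ℕ => (n : ℤ)) h
      push_cast at this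
      linarith
    have hG := hdeg u v y x h'
    refine ⟨hG, ?_⟩
    omega
  -- the coloring
  have hMpos : ∀ _ : W, 0 < M := by
    intro x
    have : 0 < m := by
      have := hdlt x
      omega
    omega
  set f : V × W → Fin nm × Fin M := fun p =>
    (⟨idx p.2, hidxlt p.2⟩, ⟨(c p.1 + d p.2) % M, Nat.mod_lt _ (hMpos p.2)⟩) with hf
  have hckM : ∀ u : V, (c u : ℕ) < M := fun u =>
    lt_of_lt_of_le (c u).2 (le_max_left _ _)
  have hdM : ∀ x : W, d x < M := fun x =>
    lt_of_lt_of_le (hdlt x) (le_max_right _ _)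
  have hcne : ∀ (u v : V) (x y : W), (c u : ℕ) ≠ (c v : ℕ) → d x = d y →
      (c u + d x) % M ≠ (c v + d y) % M := by
    intro u v x y hne hdxy h
    rw [hdxy] at h
    have : (c u : ℕ) % M = (c v : ℕ) % M :=
      Nat.ModEq.add_right_cancel' (d y) h
    rw [Nat.mod_eq_of_lt (hckM u), Nat.mod_eq_of_lt (hckM v)] at this
    exact hne this
  have hdne : ∀ (u v : V) (x y : W), (c u : ℕ) = (c v : ℕ) → d x ≠ d y →
      (c u + d x) % M ≠ (c v + d y) % M := by
    intro u v x y hc hne h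
    rw [hc] at h
    have : d x % M = d y % M := Nat.ModEq.add_left_cancel' (c v : ℕ) h
    rw [Nat.mod_eq_of_lt (hdM x), Nat.mod_eq_of_lt (hdM y)] at this
    exact hne this
  have hcol : (deltaComp (G □ H)).Colorable (nm * M) := by
    have C : (deltaComp (G □ H)).Coloring (Fin nm × Fin M) := by
      refine SimpleGraph.Coloring.mk f ?_
      rintro ⟨u, x⟩ ⟨v, y⟩ ⟨hne, hadj⟩
      simp only [hdegP] at hadj
      rcases hadj with ⟨hdeq, hnadj⟩ | ⟨hdneq, hadj⟩
      · obtain ⟨hGd, hHd⟩ := hsplit u v x y hdeq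
        by_cases hxy : x = y
        · subst hxy
          have huv : u ≠ v := fun h => hne (by rw [h])
          have hGnadj : ¬ G.Adj u v := fun h => hnadj (Or.inl ⟨h, rfl⟩)
          have hcadj : (deltaComp G).Adj u v := ⟨huv, Or.inl ⟨hGd, hGnadj⟩⟩
          have hcuv := c.valid hcadj
          have : (c u : ℕ) ≠ (c v : ℕ) := fun h => hcuv (Fin.ext h)
          intro heq
          exact hcne u v x x this rfl
            (congrArg (fun p : Fin nm × Fin M => (p.2 : ℕ)) heq)
        · intro heq
          exact hidxinj x y hHd hxy
            (congrArg (fun p : Fin nm × Fin M => (p.1 : ℕ)) heq)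
      · rcases hadj with ⟨hGadj, hxy'⟩ | ⟨hHadj, huv'⟩
        · -- x = y, G.Adj u v
          have hxy : x = y := hxy'
          have hGd : G.degree u ≠ G.degree v := by
            intro h; exact hdneq (by rw [h, hxy])
          have huv : u ≠ v := G.ne_of_adj hGadj
          have hcadj : (deltaComp G).Adj u v := ⟨huv, Or.inr ⟨hGd, hGadj⟩⟩
          have hcuv := c.valid hcadj
          have hcnat : (c u : ℕ) ≠ (c v : ℕ) := fun h => hcuv (Fin.ext h)
          intro heq
          exact hcne u v x y hcnat (congrArg d hxy)
            (congrArg (fun p : Fin nm × Fin M => (p.2 : ℕ)) heq)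
        · -- u = v, H.Adj x y
          have huv : u = v := huv'
          have hHd : H.degree x ≠ H.degree y := by
            intro h; exact hdneq (by rw [h, huv])
          intro heq
          exact hdne u v x y (congrArg (fun w => ((c w : ℕ))) huv) (hdinj x y hHd)
            (congrArg (fun p : Fin nm × Fin M => (p.2 : ℕ)) heq)
    have := C.colorable
    rwa [Fintype.card_prod, Fintype.card_fin, Fintype.card_fin] at this
  have hle : (deltaComp (G □ H)).chromaticNumber ≤ ((nm * M : ℕ) : ℕ∞) :=
    hcol.chromaticNumber_le
  have hcast : ((nm * M : ℕ) : ℕ∞) = (nm : ℕ∞) * max (k : ℕ∞) (m : ℕ∞) := by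
    have hmax : ((max k m : ℕ) : ℕ∞) = max (k : ℕ∞) (m : ℕ∞) := by
      rcases le_total k m with h | h
      · simp [max_eq_right h, max_eq_right (show (k : ℕ∞) ≤ m by exact_mod_cast h)]
      · simp [max_eq_left h, max_eq_left (show (m : ℕ∞) ≤ k by exact_mod_cast h)]
    rw [Nat.cast_mul, hM, hmax]
  calc deltaChrom (G □ H) ≤ ((nm * M : ℕ) : ℕ∞) := hle
    _ = (nm : ℕ∞) * max (k : ℕ∞) (m : ℕ∞) := hcast
    _ = (nMaxDeg H : ℕ∞) * max (deltaChrom G) ((numDeg H : ℕ) : ℕ∞) := by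
        rw [hkeq]
end

section
/- Let G be a finite graph with χ_δ(G) ≥ 2 such that no two vertices u, v of G satisfy deg(v) = deg(u) + 1. Then χ_δ(G □ P₃) ≤ 2 χ_δ(G). -/
open scoped Classical
open SimpleGraph

-- degree facts for pathGraph 3
lemma pg3_deg0 : (pathGraph 3).degree (0 : Fin 3) = 1 := by
  have h : (pathGraph 3).neighborFinset (0 : Fin 3) = {1} := by
    ext a
    simp only [SimpleGraph.mem_neighborFinset, pathGraph_adj, Finset.mem_singleton]
    fin_cases a <;> simp <;> omega
  rw [SimpleGraph.degree, h]; rfl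

lemma pg3_deg1 : (pathGraph 3).degree (1 : Fin 3) = 2 := by
  have h : (pathGraph 3).neighborFinset (1 : Fin 3) = {0, 2} := by
    ext a
    simp only [SimpleGraph.mem_neighborFinset, pathGraph_adj, Finset.mem_insert,
      Finset.mem_singleton]
    fin_cases a <;> simp <;> omega
  rw [SimpleGraph.degree, h]; rfl

lemma pg3_deg2 : (pathGraph 3).degree (2 : Fin 3) = 1 := by
  have h : (pathGraph 3).neighborFinset (2 : Fin 3) = {1} := by
    ext a
    simp only [SimpleGraph.mem_neighborFinset, pathGraph_adj, Finset.mem_singleton]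
    fin_cases a <;> simp <;> omega
  rw [SimpleGraph.degree, h]; rfl


/-- If `χ_δ(G) ≥ 2` and no vertex degree in `G` exceeds another by exactly one,
then `χ_δ(G □ P₃) ≤ 2 χ_δ(G)`. -/
theorem deltaChrom_boxProd_pathGraph_three_le {V : Type*} [Fintype V]
    (G : SimpleGraph V) (hchi : 2 ≤ deltaChrom G)
    (hdeg : ∀ u v : V, G.degree v ≠ G.degree u + 1) :
    deltaChrom (G □ pathGraph 3) ≤ 2 * deltaChrom G := by
  set n := ((deltaComp G).chromaticNumber).toNat with hn
  have hcol : (deltaComp G).Colorable n := colorable_chromaticNumber_of_fintype _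
  have hne : (deltaComp G).chromaticNumber ≠ ⊤ :=
    chromaticNumber_ne_top_iff_exists.mpr ⟨_, (deltaComp G).colorable_of_fintype⟩
  have heq : deltaChrom G = (n : ℕ∞) := (ENat.coe_toNat hne).symm
  have hn2 : 2 ≤ n := by
    have := hchi
    rw [heq] at this
    exact_mod_cast this
  haveI : NeZero n := ⟨by omega⟩
  obtain ⟨c⟩ := hcol
  have hone : (1 : Fin n) ≠ 0 := by
    simp [Fin.ext_iff]; omega
  -- helper: proper coloring facts
  have L1 : ∀ {u v : V}, u ≠ v → G.degree u = G.degree v → ¬ G.Adj u v → c u ≠ c v :=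
    fun {u v} h1 h2 h3 => c.valid ⟨h1, Or.inl ⟨h2, h3⟩⟩
  have L2 : ∀ {u v : V}, G.degree u ≠ G.degree v → G.Adj u v → c u ≠ c v :=
    fun {u v} h2 h3 => c.valid ⟨G.ne_of_adj h3, Or.inr ⟨h2, h3⟩⟩
  let f : V × Fin 3 → Fin n × Fin 2 := fun x =>
    (c x.1 + (if x.2 = 1 then 1 else 0), if x.2 = 2 then 1 else 0)
  have hbd : ∀ (u : V) (i : Fin 3) (inst : Fintype ((G □ pathGraph 3).neighborSet (u,i))),
      @SimpleGraph.degree _ (G □ pathGraph 3) (u,i) inst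
        = G.degree u + (pathGraph 3).degree i := by
    intro u i inst
    convert degree_boxProd (u,i) using 2
  have hvalid : ∀ {a b : V × Fin 3}, (deltaComp (G □ pathGraph 3)).Adj a b → f a ≠ f b := by
    rintro ⟨u, i⟩ ⟨v, j⟩ ⟨hnab, hor⟩
    have hadd1 : ∀ x : Fin n, x + 1 ≠ x := fun x h => hone (add_eq_left.mp h)
    fin_cases i <;> fin_cases j <;>
      simp [hbd, pg3_deg0, pg3_deg1, pg3_deg2, boxProd_adj, pathGraph_adj, f,
        Prod.ext_iff] at hor hnab ⊢
    · rcases hor with ⟨hd, hna⟩ | ⟨hd, ha⟩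
      · exact L1 hnab hd hna
      · exact L2 hd ha
    · rcases hor with ⟨hd, -⟩ | ⟨-, huv⟩
      · exact absurd hd (hdeg v u)
      · subst huv; exact fun h => hadd1 (c u) h.symm
    · rcases hor with ⟨hd, -⟩ | ⟨-, huv⟩
      · exact absurd hd.symm (hdeg u v)
      · subst huv; exact hadd1 (c u)
    · rcases hor with ⟨hd, hna⟩ | ⟨hd, ha⟩
      · exact L1 hnab hd hna
      · exact L2 hd ha
    · rcases hor with ⟨hd, hna⟩ | ⟨hd, ha⟩
      · exact L1 hnab hd hna
      · exact L2 hd ha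
  have C : (deltaComp (G □ pathGraph 3)).Coloring (Fin n × Fin 2) :=
    SimpleGraph.Coloring.mk f hvalid
  have hcol2 : (deltaComp (G □ pathGraph 3)).Colorable (n * 2) := by
    have h := C.colorable
    rwa [Fintype.card_prod, Fintype.card_fin, Fintype.card_fin] at h
  calc deltaChrom (G □ pathGraph 3) ≤ ((n * 2 : ℕ) : ℕ∞) := hcol2.chromaticNumber_le
    _ = 2 * deltaChrom G := by rw [heq]; push_cast; ring
end

section
/- For m ≥ 3, the δ-chromatic number of S_{1,m} □ P₃ equals 2m. -/
open scoped Classical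
open SimpleGraph

/-- The star `S_{1,m}` with one center and `m` leaves. -/
def starGraph (m : ℕ) : SimpleGraph (Fin 1 ⊕ Fin m) := completeBipartiteGraph (Fin 1) (Fin m)

section degrees
lemma star_deg_center (m : ℕ) (a : Fin 1) : (_root_.starGraph m).degree (Sum.inl a) = m := by
  have : (_root_.starGraph m).neighborFinset (Sum.inl a) =
      Finset.univ.map ⟨Sum.inr, Sum.inr_injective⟩ := by
    ext x
    rw [mem_neighborFinset]
    cases x <;> simp [_root_.starGraph, mem_neighborFinset]
  rw [degree, this]
  simp

lemma star_deg_leaf (m : ℕ) (i : Fin m) : (_root_.starGraph m).degree (Sum.inr i) = 1 := by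
  have : (_root_.starGraph m).neighborFinset (Sum.inr i) = {Sum.inl 0} := by
    ext x
    rw [mem_neighborFinset]
    cases x with
    | inl a => simp [_root_.starGraph, mem_neighborFinset, Fin.fin_one_eq_zero a]
    | inr b => simp [_root_.starGraph, mem_neighborFinset]
  rw [degree, this, Finset.card_singleton]

lemma path_deg (j : Fin 3) : (pathGraph 3).degree j = if j.val = 1 then 2 else 1 := by
  fin_cases j
  · show (pathGraph 3).degree 0 = _
    have : (pathGraph 3).neighborFinset 0 = {1} := by
      ext x; rw [mem_neighborFinset, pathGraph_adj]; rw [Finset.mem_singleton, Fin.ext_iff]; omega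
    simp [degree, this]
  · show (pathGraph 3).degree 1 = _
    have : (pathGraph 3).neighborFinset 1 = {0, 2} := by
      ext x; rw [mem_neighborFinset, pathGraph_adj]
      rw [Finset.mem_insert, Finset.mem_singleton, Fin.ext_iff, Fin.ext_iff]; omega
    rw [degree, this]; decide
  · show (pathGraph 3).degree 2 = _
    have : (pathGraph 3).neighborFinset 2 = {1} := by
      ext x; rw [mem_neighborFinset, pathGraph_adj]; rw [Finset.mem_singleton, Fin.ext_iff]; omega
    simp [degree, this]

lemma degree_irrel {V : Type*} {G : SimpleGraph V} (v : V)
    (i1 i2 : Fintype (G.neighborSet v)) :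
    @SimpleGraph.degree _ G v i1 = @SimpleGraph.degree _ G v i2 := by
  congr 1
  exact Subsingleton.elim i1 i2

lemma prod_deg0 (m : ℕ) (x : Fin 1 ⊕ Fin m) (j : Fin 3) :
    (_root_.starGraph m □ pathGraph 3).degree (x, j) =
      (Sum.elim (fun _ => m) (fun _ => 1) x) + (if j.val = 1 then 2 else 1) := by
  rw [degree_boxProd]
  cases x with
  | inl a => rw [star_deg_center, path_deg]; rfl
  | inr i => rw [star_deg_leaf, path_deg]; rfl

lemma prod_deg (m : ℕ) (x : Fin 1 ⊕ Fin m) (j : Fin 3)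
    {inst : Fintype ((_root_.starGraph m □ pathGraph 3).neighborSet (x, j))} :
    @SimpleGraph.degree _ (_root_.starGraph m □ pathGraph 3) (x, j) inst =
      (Sum.elim (fun _ => m) (fun _ => 1) x) + (if j.val = 1 then 2 else 1) := by
  rw [degree_irrel (G := _root_.starGraph m □ pathGraph 3) (x, j) inst]
  exact prod_deg0 m x j
end degrees

/-- The explicit coloring. -/
def col (m : ℕ) (hm : 3 ≤ m) : (Fin 1 ⊕ Fin m) × Fin 3 → Fin (2 * m) := fun v =>
  match v with
  | (Sum.inl _, j) =>
      if j.val = 0 then ⟨m + 1, by omega⟩ else if j.val = 1 then ⟨m, by omega⟩ else ⟨0, by omega⟩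
  | (Sum.inr i, j) =>
      if j.val = 0 then ⟨i, by omega⟩
      else if j.val = 1 then ⟨(i.val + 1) % m, lt_of_lt_of_le (Nat.mod_lt _ (by omega)) (by omega)⟩
      else ⟨m + i, by omega⟩

lemma modfact (m i : ℕ) (h : i < m) : (i + 1) % m = if i + 1 = m then 0 else i + 1 := by
  split_ifs with hh
  · rw [hh, Nat.mod_self]
  · exact Nat.mod_eq_of_lt (by omega)

lemma col_valid (m : ℕ) (hm : 3 ≤ m) :
    ∀ {u v}, (deltaComp (_root_.starGraph m □ pathGraph 3)).Adj u v → col m hm u ≠ col m hm v := by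
  rintro ⟨x, j⟩ ⟨y, k⟩ ⟨hne, h2⟩ hcol
  rw [prod_deg, prod_deg] at h2
  rw [Fin.ext_iff] at hcol
  have hj := j.isLt; have hk := k.isLt
  cases x with
  | inl a =>
    cases y with
    | inl b =>
      have hne' : j.val ≠ k.val := fun h =>
        hne (by rw [Subsingleton.elim a b, show j = k from Fin.ext h])
      simp only [col, apply_ite (Fin.val (n := 2 * m))] at hcol
      split_ifs at hcol <;> omega
    | inr b =>
      have hb := b.isLt
      have hmb2 : (b.val + 1) % m < m := Nat.mod_lt _ (by omega)
      have hmb : (b.val + 1) % m = b.val + 1 ∨ ((b.val + 1) % m = 0 ∧ b.val + 1 = m) := by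
        rcases Nat.lt_or_ge (b.val + 1) m with h | h
        · exact Or.inl (Nat.mod_eq_of_lt h)
        · have : b.val + 1 = m := by omega
          exact Or.inr ⟨by rw [this, Nat.mod_self], this⟩
      simp only [col, apply_ite (Fin.val (n := 2 * m)), Sum.elim_inl, Sum.elim_inr,
        boxProd_adj, _root_.starGraph, completeBipartiteGraph_adj, pathGraph_adj, Fin.ext_iff,
        Sum.isLeft_inl, Sum.isRight_inr, Sum.isRight_inl, Sum.isLeft_inr,
        true_and, and_true, false_and, and_false, or_false, false_or,
        true_or, or_true, not_false_eq_true, not_true, true_implies, implies_true,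
        not_or, not_and_or, reduceCtorEq] at hcol h2
      split_ifs at hcol h2 <;> try omega
  | inr a =>
    have ha := a.isLt
    have hma2 : (a.val + 1) % m < m := Nat.mod_lt _ (by omega)
    have hma : (a.val + 1) % m = a.val + 1 ∨ ((a.val + 1) % m = 0 ∧ a.val + 1 = m) := by
      rcases Nat.lt_or_ge (a.val + 1) m with h | h
      · exact Or.inl (Nat.mod_eq_of_lt h)
      · have : a.val + 1 = m := by omega
        exact Or.inr ⟨by rw [this, Nat.mod_self], this⟩
    cases y with
    | inl b =>
      simp only [col, apply_ite (Fin.val (n := 2 * m)), Sum.elim_inl, Sum.elim_inr,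
        boxProd_adj, _root_.starGraph, completeBipartiteGraph_adj, pathGraph_adj, Fin.ext_iff,
        Sum.isLeft_inl, Sum.isRight_inr, Sum.isRight_inl, Sum.isLeft_inr,
        true_and, and_true, false_and, and_false, or_false, false_or,
        true_or, or_true, not_false_eq_true, not_true, true_implies, implies_true,
        not_or, not_and_or, reduceCtorEq] at hcol h2
      split_ifs at hcol h2 <;> try omega
    | inr b =>
      have hb := b.isLt
      have hmb2 : (b.val + 1) % m < m := Nat.mod_lt _ (by omega)
      have hmb : (b.val + 1) % m = b.val + 1 ∨ ((b.val + 1) % m = 0 ∧ b.val + 1 = m) := by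
        rcases Nat.lt_or_ge (b.val + 1) m with h | h
        · exact Or.inl (Nat.mod_eq_of_lt h)
        · have : b.val + 1 = m := by omega
          exact Or.inr ⟨by rw [this, Nat.mod_self], this⟩
      have hne' : ¬(a.val = b.val ∧ j.val = k.val) := by
        rintro ⟨h1, h2⟩
        exact hne (by rw [show a = b from Fin.ext h1, show j = k from Fin.ext h2])
      simp only [col, apply_ite (Fin.val (n := 2 * m)), Sum.elim_inl, Sum.elim_inr,
        boxProd_adj, _root_.starGraph, completeBipartiteGraph_adj, pathGraph_adj, Fin.ext_iff,
        Sum.isLeft_inl, Sum.isRight_inr, Sum.isRight_inl, Sum.isLeft_inr, Sum.inr.injEq,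
        true_and, and_true, false_and, and_false, or_false, false_or,
        true_or, or_true, not_false_eq_true, not_true, true_implies, implies_true,
        not_or, not_and_or, reduceCtorEq] at hcol h2
      split_ifs at hcol h2 <;> try omega

def cliqueEmb (m : ℕ) : Fin m ⊕ Fin m ↪ (Fin 1 ⊕ Fin m) × Fin 3 where
  toFun z := (Sum.inr (Sum.elim id id z), Sum.elim (fun _ => (0 : Fin 3)) (fun _ => 2) z)
  inj' := by
    rintro (a | a) (b | b) h <;>
      simp only [Sum.elim_inl, Sum.elim_inr, Prod.mk.injEq, Sum.inr.injEq, id] at h <;>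
      first
        | (exact absurd h.2 (by decide))
        | (rw [h.1])

lemma cliqueEmb_apply (m : ℕ) (z : Fin m ⊕ Fin m) :
    cliqueEmb m z = (Sum.inr (Sum.elim id id z), Sum.elim (fun _ => (0 : Fin 3)) (fun _ => 2) z) :=
  rfl

lemma clique_lemma (m : ℕ) (hm : 3 ≤ m) :
    (deltaComp (_root_.starGraph m □ pathGraph 3)).IsClique
      ((Finset.univ.map (cliqueEmb m)) : Finset _) := by
  rintro u hu v hv huv
  simp only [Finset.coe_map, Set.mem_image, Finset.mem_coe, Finset.mem_map,
    Finset.mem_univ, true_and, Finset.coe_univ, Set.image_univ, Set.mem_range] at hu hv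
  obtain ⟨z, rfl⟩ := hu
  obtain ⟨w, rfl⟩ := hv
  refine ⟨huv, Or.inl ⟨?_, ?_⟩⟩
  · rcases z with a | a <;> rcases w with b | b <;>
      rw [cliqueEmb_apply, cliqueEmb_apply, prod_deg, prod_deg] <;> simp
  · rcases z with a | a <;> rcases w with b | b <;>
      simp only [cliqueEmb_apply, Sum.elim_inl, Sum.elim_inr, id,
        boxProd_adj, _root_.starGraph, completeBipartiteGraph_adj, pathGraph_adj,
        Sum.isLeft_inr, Sum.isRight_inr, Bool.false_eq_true, false_and, and_false,
        false_or, or_self, not_and, not_or, Sum.inr.injEq] <;>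
      [skip; skip; skip; skip] <;>
      first
        | (rintro (h | h) <;> simp_all)
        | (intro h; simp_all)


/-- For `m ≥ 3`, `χ_δ(S_{1,m} □ P₃) = 2m`. -/
theorem deltaChrom_star_boxProd_path_three (m : ℕ) (hm : 3 ≤ m) :
    deltaChrom (_root_.starGraph m □ pathGraph 3) = ((2 * m : ℕ) : ℕ∞) := by
  apply le_antisymm
  · have hcol : (deltaComp (_root_.starGraph m □ pathGraph 3)).Colorable (2 * m) := by
      have C : (deltaComp (_root_.starGraph m □ pathGraph 3)).Coloring (Fin (2 * m)) :=
        SimpleGraph.Coloring.mk (col m hm) (col_valid m hm)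
      simpa using C.colorable
    exact hcol.chromaticNumber_le
  · have h := (clique_lemma m hm).card_le_chromaticNumber
    rwa [Finset.card_map, Finset.card_univ, Fintype.card_sum, Fintype.card_fin,
      show m + m = 2 * m by ring] at h
end

section
/- For 6 ≤ n ≤ k, the δ-chromatic number of the grid P_n □ P_k equals ⌈(n-2)(k-2)/2⌉. -/
open scoped Classical
open SimpleGraph

def dN (n i : ℕ) : ℕ := if i = 0 ∨ i = n - 1 then 1 else 2

lemma M_split (a b : ℕ) :
    (a * b + 1) / 2 = a * (b / 2) + (if b % 2 = 1 then (a + 1) / 2 else 0) := by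
  have h1 : b = 2 * (b / 2) + b % 2 := by omega
  have h2 : a * b = 2 * (a * (b / 2)) + a * (b % 2) := by
    conv_lhs => rw [h1]
    ring
  rcases (by omega : b % 2 = 0 ∨ b % 2 = 1) with h | h <;>
    rw [h] at h2 <;> simp only [h, Nat.mul_zero, Nat.mul_one] <;> simp <;> omega

lemma mul_lt_helper {r t a h : ℕ} (hr : r < a) (ht : t < h) : r * h + t < a * h := by
  have h1 : r * h + h = (r + 1) * h := by ring
  have h2 : (r + 1) * h ≤ a * h := Nat.mul_le_mul_right _ (by omega)
  omega

def enc (k : ℕ) (p : ℕ × ℕ) : ℕ := p.1 * ((k - 2) / 2) + p.2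

lemma enc_inj {a h : ℕ} {r t r' t' : ℕ}
    (h1 : r < a ∧ t < h ∨ r = a) (h2 : r' < a ∧ t' < h ∨ r' = a)
    (he : r * h + t = r' * h + t') : r = r' ∧ t = t' := by
  rcases h1 with ⟨hr, ht⟩ | rfl <;> rcases h2 with ⟨hr', ht'⟩ | rfl
  · have key : r = r' := by
      by_contra hne
      rcases Nat.lt_or_ge r r' with hlt | hge
      · have hx : (r + 1) * h ≤ r' * h := Nat.mul_le_mul_right _ (by omega)
        have hy : r * h + h = (r + 1) * h := by ring
        omega
      · have hlt : r' < r := by omega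
        have hx : (r' + 1) * h ≤ r * h := Nat.mul_le_mul_right _ (by omega)
        have hy : r' * h + h = (r' + 1) * h := by ring
        omega
    subst key; omega
  · have := mul_lt_helper hr ht; omega
  · have := mul_lt_helper hr' ht'; omega
  · omega

def cp (n k i j : ℕ) : ℕ × ℕ :=
  if i = 0 then
    if j = 0 then (0, 0)
    else if j = k - 1 then (0, 1)
    else if j - 1 < 2 * ((k-2)/2) then (2, (j-1)/2) else (n-2, 1)
  else if i = n - 1 then
    if j = 0 then (2, 0)
    else if j = k - 1 then (2, 1)
    else if j - 1 < 2 * ((k-2)/2) then (0, (j-1)/2) else (n-2, 0)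
  else if j = 0 then
    if i - 1 < 2 * ((n-2)/2) then (2*((i-1)/2)+1, (k-2)/2 - 1) else (n-3, (k-2)/2 - 1)
  else if j = k - 1 then
    if i - 1 < 2 * ((n-2)/2) then (2*((i-1)/2)+1, 0) else (n-3, 0)
  else
    if j - 1 < 2 * ((k-2)/2) then (i-1, (j-1)/2) else (n-2, (i-1)/2)

lemma cp_shape {n k i j : ℕ} (hn : 6 ≤ n) (hk : n ≤ k) (hi : i < n) (hj : j < k) :
    ((cp n k i j).1 < n - 2 ∧ (cp n k i j).2 < (k - 2) / 2) ∨ (cp n k i j).1 = n - 2 := by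
  unfold cp
  split_ifs <;> dsimp only <;> omega

lemma cp_enc_lt {n k i j : ℕ} (hn : 6 ≤ n) (hk : n ≤ k) (hi : i < n) (hj : j < k) :
    enc k (cp n k i j) < ((n - 2) * (k - 2) + 1) / 2 := by
  have hM := M_split (n - 2) (k - 2)
  have hh : 2 ≤ (k - 2) / 2 := by omega
  unfold cp enc
  split_ifs with h1 h2 h3 h4 h5 h6 h7 h8 h9 h10 h11 h12 <;> simp only []
  · -- (0,0)
    have := mul_lt_helper (show 0 < n-2 by omega) (show 0 < (k-2)/2 by omega)
    split_ifs at hM <;> omega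
  · have := mul_lt_helper (show 0 < n-2 by omega) (show 1 < (k-2)/2 by omega)
    split_ifs at hM <;> omega
  · have := mul_lt_helper (show 2 < n-2 by omega) (show (j-1)/2 < (k-2)/2 by omega)
    split_ifs at hM <;> omega
  · -- (n-2, 1) : b odd
    have hodd : (k-2) % 2 = 1 := by omega
    rw [if_pos hodd] at hM
    omega
  · have := mul_lt_helper (show 2 < n-2 by omega) (show 0 < (k-2)/2 by omega)
    split_ifs at hM <;> omega
  · have := mul_lt_helper (show 2 < n-2 by omega) (show 1 < (k-2)/2 by omega)
    split_ifs at hM <;> omega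
  · have := mul_lt_helper (show 0 < n-2 by omega) (show (j-1)/2 < (k-2)/2 by omega)
    split_ifs at hM <;> omega
  · have hodd : (k-2) % 2 = 1 := by omega
    rw [if_pos hodd] at hM
    omega
  · have := mul_lt_helper (show 2*((i-1)/2)+1 < n-2 by omega) (show (k-2)/2 - 1 < (k-2)/2 by omega)
    split_ifs at hM <;> omega
  · have := mul_lt_helper (show n-3 < n-2 by omega) (show (k-2)/2 - 1 < (k-2)/2 by omega)
    split_ifs at hM <;> omega
  · have := mul_lt_helper (show 2*((i-1)/2)+1 < n-2 by omega) (show 0 < (k-2)/2 by omega)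
    split_ifs at hM <;> omega
  · have := mul_lt_helper (show n-3 < n-2 by omega) (show 0 < (k-2)/2 by omega)
    split_ifs at hM <;> omega
  · have := mul_lt_helper (show i-1 < n-2 by omega) (show (j-1)/2 < (k-2)/2 by omega)
    split_ifs at hM <;> omega
  · have hodd : (k-2) % 2 = 1 := by omega
    rw [if_pos hodd] at hM
    omega

def dec (n k c : ℕ) : ℕ × ℕ :=
  if c < (n-2) * ((k-2)/2) then
    (c / ((k-2)/2) + 1, 2 * (c % ((k-2)/2)) + 2 - (c / ((k-2)/2) + 1) % 2)
  else (2 * (c - (n-2) * ((k-2)/2)) + 1, k - 2)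

lemma dec_spec {n k c : ℕ} (hn : 6 ≤ n) (hk : n ≤ k) (hc : c < ((n-2)*(k-2)+1)/2) :
    1 ≤ (dec n k c).1 ∧ (dec n k c).1 ≤ n - 2 ∧ 1 ≤ (dec n k c).2 ∧ (dec n k c).2 ≤ k - 2 ∧
      ((dec n k c).1 + (dec n k c).2) % 2 = 0 := by
  have hM := M_split (n-2) (k-2)
  have hh : 2 ≤ (k-2)/2 := by omega
  unfold dec
  split_ifs with hb
  · have e2 : c % ((k-2)/2) < (k-2)/2 := Nat.mod_lt _ (by omega)
    have e3 : c / ((k-2)/2) < n - 2 := by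
      rw [Nat.div_lt_iff_lt_mul (by omega : 0 < (k-2)/2)]
      omega
    dsimp only
    generalize c / ((k-2)/2) = q at e3 ⊢
    generalize c % ((k-2)/2) = s at e2 ⊢
    omega
  · split_ifs at hM with hodd
    · dsimp only; omega
    · omega

lemma dec_inj {n k : ℕ} {c c' : ℕ} (hn : 6 ≤ n) (hk : n ≤ k)
    (hc : c < ((n-2)*(k-2)+1)/2) (hc' : c' < ((n-2)*(k-2)+1)/2)
    (he : dec n k c = dec n k c') : c = c' := by
  have hM := M_split (n-2) (k-2)
  have hh : 2 ≤ (k-2)/2 := by omega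
  have d1 := Nat.div_add_mod c ((k-2)/2)
  have d2 := Nat.div_add_mod c' ((k-2)/2)
  have e2 : c % ((k-2)/2) < (k-2)/2 := Nat.mod_lt _ (by omega)
  have e2' : c' % ((k-2)/2) < (k-2)/2 := Nat.mod_lt _ (by omega)
  have m1 : (c / ((k-2)/2) + 1) % 2 < 2 := Nat.mod_lt _ (by omega)
  have m1' : (c' / ((k-2)/2) + 1) % 2 < 2 := Nat.mod_lt _ (by omega)
  unfold dec at he
  split_ifs at he with h1 h2 h2 <;> simp only [Prod.mk.injEq] at he
  · -- both row type
    have hq : c / ((k-2)/2) = c' / ((k-2)/2) := by omega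
    have hs : c % ((k-2)/2) = c' % ((k-2)/2) := by
      rw [hq] at he
      generalize c' / ((k-2)/2) = q at he m1' ⊢
      generalize c % ((k-2)/2) = s at he e2 ⊢
      generalize c' % ((k-2)/2) = s' at he e2' ⊢
      omega
    rw [← d1, ← d2, hq, hs]
  · -- row vs vertical
    exfalso
    split_ifs at hM with hodd
    · generalize c / ((k-2)/2) = q at he m1 ⊢
      generalize c % ((k-2)/2) = s at he e2 ⊢
      omega
    · omega
  · exfalso
    split_ifs at hM with hodd
    · generalize c' / ((k-2)/2) = q at he m1' ⊢
      generalize c' % ((k-2)/2) = s at he e2' ⊢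
      omega
    · omega
  · omega

lemma dN_spec (n i : ℕ) :
    (dN n i = 1 ∧ (i = 0 ∨ i = n - 1)) ∨ (dN n i = 2 ∧ ¬(i = 0 ∨ i = n - 1)) := by
  unfold dN; split_ifs with h <;> simp [h]

set_option maxHeartbeats 4000000 in
lemma cp_valid {n k i j p q : ℕ} (hn : 6 ≤ n) (hk : n ≤ k)
    (hi : i < n) (hj : j < k) (hp : p < n) (hq : q < k)
    (hne : ¬(i = p ∧ j = q)) (hcp : cp n k i j = cp n k p q) :
    (dN n i + dN k j = dN n p + dN k q) ↔
      ((i = p ∧ (j + 1 = q ∨ q + 1 = j)) ∨ (j = q ∧ (i + 1 = p ∨ p + 1 = i))) := by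
  have A1 := dN_spec n i
  have A2 := dN_spec k j
  have A3 := dN_spec n p
  have A4 := dN_spec k q
  simp only [cp] at hcp
  split_ifs at hcp <;> (simp only [Prod.mk.injEq] at hcp; omega)


lemma dN_two {n x : ℕ} (hn : 2 ≤ n) (h1 : 1 ≤ x) (h2 : x ≤ n - 2) : dN n x = 2 := by
  unfold dN; split_ifs with h <;> omega

lemma pathGraph_degree_eq {n : ℕ} (hn : 2 ≤ n) (v : Fin n) :
    (pathGraph n).degree v = dN n v.val := by
  by_cases h0 : v.val = 0
  · have hne : (pathGraph n).neighborFinset v = {⟨1, by omega⟩} := by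
      ext u
      simp only [SimpleGraph.mem_neighborFinset, SimpleGraph.pathGraph_adj,
        Finset.mem_singleton, Fin.ext_iff]
      omega
    rw [← SimpleGraph.card_neighborFinset_eq_degree, hne, Finset.card_singleton]
    unfold dN; split_ifs with h <;> omega
  · by_cases h1 : v.val = n - 1
    · have hne : (pathGraph n).neighborFinset v = {⟨n - 2, by omega⟩} := by
        ext u
        simp only [SimpleGraph.mem_neighborFinset, SimpleGraph.pathGraph_adj,
          Finset.mem_singleton, Fin.ext_iff]
        omega
      rw [← SimpleGraph.card_neighborFinset_eq_degree, hne, Finset.card_singleton]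
      unfold dN; split_ifs with h <;> omega
    · have hv := v.isLt
      have hne : (pathGraph n).neighborFinset v =
          {⟨v.val - 1, by omega⟩, ⟨v.val + 1, by omega⟩} := by
        ext u
        simp only [SimpleGraph.mem_neighborFinset, SimpleGraph.pathGraph_adj,
          Finset.mem_insert, Finset.mem_singleton, Fin.ext_iff]
        omega
      rw [← SimpleGraph.card_neighborFinset_eq_degree, hne, Finset.card_pair (by
        simp only [ne_eq, Fin.ext_iff]; omega)]
      unfold dN; split_ifs with h <;> omega

lemma degree_congr {V : Type*} (G : SimpleGraph V) (v : V)
    (i1 i2 : Fintype (G.neighborSet v)) :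
    @SimpleGraph.degree V G v i1 = @SimpleGraph.degree V G v i2 := by
  cases Subsingleton.elim i1 i2; rfl

lemma grid_degree {n k : ℕ} (hn : 6 ≤ n) (hk : n ≤ k) (v : Fin n × Fin k)
    {inst : Fintype ((pathGraph n □ pathGraph k).neighborSet v)} :
    @SimpleGraph.degree _ (pathGraph n □ pathGraph k) v inst
      = dN n v.1.val + dN k v.2.val := by
  rw [degree_congr _ v inst inferInstance]
  rw [SimpleGraph.degree_boxProd, pathGraph_degree_eq (by omega) v.1,
    pathGraph_degree_eq (by omega) v.2]

lemma grid_adj_iff {n k : ℕ} (u v : Fin n × Fin k) :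
    (pathGraph n □ pathGraph k).Adj u v ↔
      ((u.1.val = v.1.val ∧ (u.2.val + 1 = v.2.val ∨ v.2.val + 1 = u.2.val)) ∨
       (u.2.val = v.2.val ∧ (u.1.val + 1 = v.1.val ∨ v.1.val + 1 = u.1.val))) := by
  rw [SimpleGraph.boxProd_adj]
  simp only [SimpleGraph.pathGraph_adj, Fin.ext_iff]
  tauto

noncomputable def theColoring {n k : ℕ} (hn : 6 ≤ n) (hk : n ≤ k) :
    (deltaComp (pathGraph n □ pathGraph k)).Coloring (Fin (((n-2)*(k-2)+1)/2)) :=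
  SimpleGraph.Coloring.mk
    (fun v => ⟨enc k (cp n k v.1.val v.2.val), cp_enc_lt hn hk v.1.isLt v.2.isLt⟩)
    (by
      intro u v hadj heq
      obtain ⟨hne, hor⟩ := (deltaComp_adj _ u v).mp hadj
      have hencs : enc k (cp n k u.1.val u.2.val) = enc k (cp n k v.1.val v.2.val) := by
        have := congrArg Fin.val heq
        simpa using this
      have s1 := cp_shape hn hk u.1.isLt u.2.isLt
      have s2 := cp_shape hn hk v.1.isLt v.2.isLt
      have hcp : cp n k u.1.val u.2.val = cp n k v.1.val v.2.val := by
        unfold enc at hencs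
        have := enc_inj s1 s2 hencs
        exact Prod.ext this.1 this.2
      have hne' : ¬(u.1.val = v.1.val ∧ u.2.val = v.2.val) := by
        rintro ⟨h1, h2⟩
        exact hne (Prod.ext (Fin.ext h1) (Fin.ext h2))
      have hiff := cp_valid hn hk u.1.isLt u.2.isLt v.1.isLt v.2.isLt hne' hcp
      rcases hor with ⟨hdeg, hnadj⟩ | ⟨hdeg, hadj'⟩
      · rw [grid_degree hn hk u, grid_degree hn hk v] at hdeg
        exact hnadj ((grid_adj_iff u v).mpr (hiff.mp hdeg))
      · rw [grid_degree hn hk u, grid_degree hn hk v] at hdeg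
        exact hdeg (hiff.mpr ((grid_adj_iff u v).mp hadj')))

noncomputable def decF {n k : ℕ} (hn : 6 ≤ n) (hk : n ≤ k)
    (c : Fin (((n-2)*(k-2)+1)/2)) : Fin n × Fin k :=
  (⟨(dec n k c.val).1, by have := dec_spec hn hk c.isLt; omega⟩,
   ⟨(dec n k c.val).2, by have := dec_spec hn hk c.isLt; omega⟩)

lemma decF_inj {n k : ℕ} (hn : 6 ≤ n) (hk : n ≤ k) :
    Function.Injective (decF hn hk) := by
  intro a b h
  have h1 : (dec n k a.val).1 = (dec n k b.val).1 := congrArg (fun x => x.1.val) h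
  have h2 : (dec n k a.val).2 = (dec n k b.val).2 := congrArg (fun x => x.2.val) h
  exact Fin.ext (dec_inj hn hk a.isLt b.isLt (Prod.ext h1 h2))

lemma clique_lb {n k : ℕ} (hn : 6 ≤ n) (hk : n ≤ k) :
    (deltaComp (pathGraph n □ pathGraph k)).IsClique
      ↑(Finset.image (decF hn hk) Finset.univ) := by
  intro u hu v hv huv
  simp only [Finset.coe_image, Set.mem_image, Finset.mem_coe, Finset.mem_univ] at hu hv
  obtain ⟨c, -, rfl⟩ := hu
  obtain ⟨c', -, rfl⟩ := hv
  refine (deltaComp_adj _ _ _).mpr ⟨huv, Or.inl ⟨?_, ?_⟩⟩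
  · have s1 := dec_spec hn hk c.isLt
    have s2 := dec_spec hn hk c'.isLt
    rw [grid_degree hn hk, grid_degree hn hk]
    show dN n (dec n k c.val).1 + dN k (dec n k c.val).2 =
      dN n (dec n k c'.val).1 + dN k (dec n k c'.val).2
    rw [dN_two (by omega) s1.1 s1.2.1, dN_two (by omega) s1.2.2.1 s1.2.2.2.1,
      dN_two (by omega) s2.1 s2.2.1, dN_two (by omega) s2.2.2.1 s2.2.2.2.1]
  · intro hadj
    rw [grid_adj_iff] at hadj
    have s1 := dec_spec hn hk c.isLt
    have s2 := dec_spec hn hk c'.isLt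
    simp only [decF] at hadj
    omega

/-- For `6 ≤ n ≤ k`, `χ_δ(P_n □ P_k) = ⌈(n-2)(k-2)/2⌉`. -/
theorem deltaChrom_path_boxProd_path (n k : ℕ) (hn : 6 ≤ n) (hnk : n ≤ k) :
    deltaChrom (pathGraph n □ pathGraph k) = ((((n - 2) * (k - 2) + 1) / 2 : ℕ) : ℕ∞) := by
  unfold deltaChrom
  apply le_antisymm
  · exact SimpleGraph.Colorable.chromaticNumber_le ⟨theColoring hn hnk⟩
  · have h := (clique_lb hn hnk).card_le_chromaticNumber
    rwa [Finset.card_image_of_injective _ (decF_inj hn hnk), Finset.card_univ,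
      Fintype.card_fin] at h
end

section
/- In the grid P_n □ P_k with n, k ≥ 4, the set V₄ of interior vertices (those of degree 4), which has size (n-2)(k-2), induces in (P_n □ P_k)_δ a graph in which two interior vertices (i,j), (i',j') are adjacent iff |i-i'| + |j-j'| ≥ 2; consequently χ_δ(P_n □ P_k) ≥ ⌈(n-2)(k-2)/2⌉. -/
open scoped Classical
open SimpleGraph

lemma myPathDeg {n : ℕ} (hn : 2 ≤ n) (i : Fin n) :
    (pathGraph n).degree i = if i.val = 0 ∨ i.val = n - 1 then 1 else 2 := by
  rw [degree, neighborFinset_eq_filter]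
  have hi := i.isLt
  split_ifs with h
  · rcases h with h | h
    · rw [Finset.card_eq_one]
      refine ⟨⟨1, by omega⟩, ?_⟩
      ext j
      have hj := j.isLt
      simp only [Finset.mem_filter, Finset.mem_univ, true_and, pathGraph_adj,
        Finset.mem_singleton, Fin.ext_iff]
      omega
    · rw [Finset.card_eq_one]
      refine ⟨⟨n - 2, by omega⟩, ?_⟩
      ext j
      have hj := j.isLt
      simp only [Finset.mem_filter, Finset.mem_univ, true_and, pathGraph_adj,
        Finset.mem_singleton, Fin.ext_iff]
      omega
  · push_neg at h
    rw [Finset.card_eq_two]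
    refine ⟨⟨i.val - 1, by omega⟩, ⟨i.val + 1, by omega⟩, by simp only [ne_eq, Fin.mk.injEq]; omega, ?_⟩
    ext j
    have hj := j.isLt
    simp only [Finset.mem_filter, Finset.mem_univ, true_and, pathGraph_adj,
      Finset.mem_insert, Finset.mem_singleton, Fin.ext_iff]
    omega

lemma myGridDeg {n k : ℕ} (hn : 4 ≤ n) (hk : 4 ≤ k) (p : Fin n × Fin k) :
    (pathGraph n □ pathGraph k).degree p = 4 ↔
      ((1 ≤ p.1.val ∧ p.1.val ≤ n - 2) ∧ (1 ≤ p.2.val ∧ p.2.val ≤ k - 2)) := by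
  rw [degree_boxProd, myPathDeg (by omega) p.1, myPathDeg (by omega) p.2]
  have h1 := p.1.isLt
  have h2 := p.2.isLt
  split_ifs <;> omega

lemma myCardInterior (n : ℕ) (hn : 2 ≤ n) :
    (Finset.univ.filter (fun i : Fin n => 1 ≤ i.val ∧ i.val ≤ n - 2)).card = n - 2 := by
  have h : n - 2 = (Finset.Ico 1 (n-1)).card := by rw [Nat.card_Ico]; omega
  rw [h]
  apply Finset.card_bij (fun i _ => i.val)
  · intro a ha; simp only [Finset.mem_filter] at ha; simp only [Finset.mem_Ico]; omega
  · intro a _ b _ h; exact Fin.ext h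
  · intro b hb
    simp only [Finset.mem_Ico] at hb
    exact ⟨⟨b, by omega⟩, by simp only [Finset.mem_filter, Finset.mem_univ, true_and]; omega, rfl⟩

lemma myCount (n k : ℕ) (hn : 4 ≤ n) (hk : 4 ≤ k) :
    ({p : Fin n × Fin k | (pathGraph n □ pathGraph k).degree p = 4}).ncard
        = (n - 2) * (k - 2) := by
  rw [Set.ncard_eq_toFinset_card', Set.toFinset_setOf]
  have : (Finset.univ.filter
      (fun p : Fin n × Fin k => (pathGraph n □ pathGraph k).degree p = 4))
      = Finset.univ.filter
        (fun p : Fin n × Fin k => (1 ≤ p.1.val ∧ p.1.val ≤ n - 2) ∧ (1 ≤ p.2.val ∧ p.2.val ≤ k - 2)) := by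
    apply Finset.filter_congr
    intro p _
    exact myGridDeg hn hk p
  rw [this]
  have h2 : (Finset.univ.filter
      (fun p : Fin n × Fin k => (1 ≤ p.1.val ∧ p.1.val ≤ n - 2) ∧ (1 ≤ p.2.val ∧ p.2.val ≤ k - 2)))
      = (Finset.univ.filter (fun a : Fin n => 1 ≤ a.val ∧ a.val ≤ n - 2)) ×ˢ
        (Finset.univ.filter (fun b : Fin k => 1 ≤ b.val ∧ b.val ≤ k - 2)) := by
    ext p
    simp only [Finset.mem_filter, Finset.mem_univ, true_and, Finset.mem_product]
  rw [h2, Finset.card_product, myCardInterior n (by omega), myCardInterior k (by omega)]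

lemma myDegCongr {V : Type*} (G : SimpleGraph V) (v : V) {i1 i2 : Fintype (G.neighborSet v)} :
    @SimpleGraph.degree V G v i1 = @SimpleGraph.degree V G v i2 := by
  cases Subsingleton.elim i1 i2; rfl

lemma myAdjChar {n k : ℕ} (p q : Fin n × Fin k)
    (hp : (pathGraph n □ pathGraph k).degree p = 4)
    (hq : (pathGraph n □ pathGraph k).degree q = 4) :
    (deltaComp (pathGraph n □ pathGraph k)).Adj p q ↔
      2 ≤ |(p.1.val : ℤ) - q.1.val| + |(p.2.val : ℤ) - q.2.val| := by
  have hred : (deltaComp (pathGraph n □ pathGraph k)).Adj p q ↔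
      p ≠ q ∧ ¬ (pathGraph n □ pathGraph k).Adj p q := by
    show (p ≠ q ∧ _) ↔ _
    rw [(myDegCongr _ _).trans hp, (myDegCongr _ _).trans hq]
    simp
  rw [hred, boxProd_adj]
  have e1 := abs_nonneg ((p.1.val : ℤ) - q.1.val)
  have e2 := abs_nonneg ((p.2.val : ℤ) - q.2.val)
  simp only [ne_eq, Prod.ext_iff, Fin.ext_iff, pathGraph_adj, not_and, not_or]
  rcases abs_choice ((p.1.val : ℤ) - q.1.val) with h1 | h1 <;>
    rcases abs_choice ((p.2.val : ℤ) - q.2.val) with h2 | h2 <;>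
    rw [h1, h2] <;> omega

lemma myNoThree (x1 y1 x2 y2 x3 y3 : ℤ)
    (h12 : |x1 - x2| + |y1 - y2| ≤ 1) (h13 : |x1 - x3| + |y1 - y3| ≤ 1)
    (h23 : |x2 - x3| + |y2 - y3| ≤ 1)
    (d12 : ¬(x1 = x2 ∧ y1 = y2)) (d13 : ¬(x1 = x3 ∧ y1 = y3))
    (d23 : ¬(x2 = x3 ∧ y2 = y3)) : False := by
  have n1 := abs_nonneg (x1 - x2); have n2 := abs_nonneg (y1 - y2)
  have n3 := abs_nonneg (x1 - x3); have n4 := abs_nonneg (y1 - y3)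
  have n5 := abs_nonneg (x2 - x3); have n6 := abs_nonneg (y2 - y3)
  rcases abs_choice (x1 - x2) with a1 | a1 <;>
  rcases abs_choice (y1 - y2) with a2 | a2 <;>
  rcases abs_choice (x1 - x3) with a3 | a3 <;>
  rcases abs_choice (y1 - y3) with a4 | a4 <;>
  rcases abs_choice (x2 - x3) with a5 | a5 <;>
  rcases abs_choice (y2 - y3) with a6 | a6 <;>
  omega

/-- In the grid `P_n □ P_k` with `n, k ≥ 4`, the set of interior (degree 4)
vertices has size `(n-2)(k-2)`, two interior vertices are adjacent in the
δ-complement iff their grid distance is at least `2`, and consequently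
`χ_δ(P_n □ P_k) ≥ ⌈(n-2)(k-2)/2⌉`. -/
theorem deltaComp_grid_interior (n k : ℕ) (hn : 4 ≤ n) (hk : 4 ≤ k) :
    ({p : Fin n × Fin k | (pathGraph n □ pathGraph k).degree p = 4}).ncard
        = (n - 2) * (k - 2) ∧
      (∀ p q : Fin n × Fin k,
        (pathGraph n □ pathGraph k).degree p = 4 →
        (pathGraph n □ pathGraph k).degree q = 4 →
        ((deltaComp (pathGraph n □ pathGraph k)).Adj p q ↔
          2 ≤ |(p.1.val : ℤ) - q.1.val| + |(p.2.val : ℤ) - q.2.val|)) ∧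
      ((((n - 2) * (k - 2) + 1) / 2 : ℕ) : ℕ∞) ≤
        deltaChrom (pathGraph n □ pathGraph k) := by
  refine ⟨myCount n k hn hk, fun p q hp hq => myAdjChar p q hp hq, ?_⟩
  -- key: any proper coloring with c colors satisfies ((n-2)*(k-2)+1)/2 ≤ c
  have key : ∀ c : ℕ, (deltaComp (pathGraph n □ pathGraph k)).Colorable c →
      ((n - 2) * (k - 2) + 1) / 2 ≤ c := by
    intro c hc
    obtain ⟨C⟩ := hc
    set S : Finset (Fin n × Fin k) :=
      Finset.univ.filter (fun p : Fin n × Fin k => (pathGraph n □ pathGraph k).degree p = 4) with hS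
    have hScard : S.card = (n - 2) * (k - 2) := by
      rw [← myCount n k hn hk, Set.ncard_eq_toFinset_card', Set.toFinset_setOf]
    have hbound : S.card ≤ 2 * c := by
      have := Finset.card_le_mul_card_image_of_maps_to
        (f := fun p => C p) (s := S) (t := (Finset.univ : Finset (Fin c)))
        (fun a _ => Finset.mem_univ _) 2 ?_
      · simpa using this
      · intro b _
        by_contra hgt
        push_neg at hgt
        obtain ⟨x, hx, y, hy, z, hz, hxy, hxz, hyz⟩ := Finset.two_lt_card.mp hgt
        simp only [Finset.mem_filter, hS, Finset.mem_univ, true_and] at hx hy hz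
        have nadj : ∀ a b : Fin n × Fin k,
            (pathGraph n □ pathGraph k).degree a = 4 →
            (pathGraph n □ pathGraph k).degree b = 4 →
            a ≠ b → C a = C b →
            |(a.1.val : ℤ) - b.1.val| + |(a.2.val : ℤ) - b.2.val| ≤ 1 := by
          intro a b ha hb hab hcol
          by_contra hge
          push_neg at hge
          have : (deltaComp (pathGraph n □ pathGraph k)).Adj a b :=
            (myAdjChar a b ha hb).mpr (by omega)
          exact C.valid this hcol
        have e12 := nadj x y hx.1 hy.1 hxy (hx.2.trans hy.2.symm)
        have e13 := nadj x z hx.1 hz.1 hxz (hx.2.trans hz.2.symm)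
        have e23 := nadj y z hy.1 hz.1 hyz (hy.2.trans hz.2.symm)
        refine myNoThree (x.1.val : ℤ) (x.2.val : ℤ) (y.1.val : ℤ) (y.2.val : ℤ)
          (z.1.val : ℤ) (z.2.val : ℤ) e12 e13 e23 ?_ ?_ ?_
        · rintro ⟨h1, h2⟩
          exact hxy (Prod.ext (Fin.ext (by exact_mod_cast h1)) (Fin.ext (by exact_mod_cast h2)))
        · rintro ⟨h1, h2⟩
          exact hxz (Prod.ext (Fin.ext (by exact_mod_cast h1)) (Fin.ext (by exact_mod_cast h2)))
        · rintro ⟨h1, h2⟩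
          exact hyz (Prod.ext (Fin.ext (by exact_mod_cast h1)) (Fin.ext (by exact_mod_cast h2)))
    omega
  have hcol := (deltaComp (pathGraph n □ pathGraph k)).colorable_of_fintype
  rw [deltaChrom, hcol.chromaticNumber_eq_sInf, Nat.cast_le]
  exact key _ (Nat.sInf_mem (s := {n' | (deltaComp (pathGraph n □ pathGraph k)).Colorable n'}) ⟨_, hcol⟩)
end
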